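/- Let V, W be real Hilbert spaces with G ≤ O(V) finite, and suppose x ∈ V is fixed by some non-identity element of G. If f : V → W is G-invariant and Fréchet differentiable at x, then the induced map f↓ : V/G → W on the quotient metric space is not lower Lipschitz: inf over pairs of distinct orbits of ‖f↓([y])−f↓([z])‖/d([y],[z]) equals 0. -/

import Mathlib

/-- for finite `G ≤ O(V)`, if `x` is fixed by a non-identity element of `G`
and `f : V → W` is `G`-invariant and Fréchet differentiable at `x`, then the induced map
on the quotient `V/G` (with quotient metric `d([y],[z]) = inf_{g∈G} ‖g·y − z‖`) is not
lower Lipschitz. -/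
theorem invariant_differentiable_not_lower_lipschitz
    {V W : Type*} [NormedAddCommGroup V] [InnerProductSpace ℝ V] [CompleteSpace V]
    [NormedAddCommGroup W] [InnerProductSpace ℝ W] [CompleteSpace W]
    (G : Subgroup (V ≃ₗᵢ[ℝ] V)) [Finite G]
    (f : V → W) (hinv : ∀ g ∈ G, ∀ v : V, f (g v) = f v)
    (x : V) (hfix : ∃ g ∈ G, g ≠ 1 ∧ g x = x)
    (A : V →L[ℝ] W) (hA : HasFDerivAt f A x) :
    ¬ ∃ α : ℝ, 0 < α ∧ ∀ y z : V,
      α * Metric.infDist z {w : V | ∃ g ∈ G, g y = w} ≤ ‖f y - f z‖ := by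
  obtain ⟨g, hgG, hgne, hgx⟩ := hfix
  obtain ⟨v, hv⟩ : ∃ v, g v ≠ v := by
    by_contra h
    push_neg at h
    exact hgne (by ext w; simp [h w])
  set u : V := g v - v with hu
  have hu0 : u ≠ 0 := sub_ne_zero.mpr hv
  have hun : 0 < ‖u‖ := norm_pos_iff.mpr hu0
  -- the derivative kills u
  have hAu : A u = 0 := by
    set B : V →L[ℝ] V := (g.toContinuousLinearEquiv : V →L[ℝ] V)
    have hB : HasFDerivAt (fun w => f (g w)) (A.comp B) x := by
      have h1 : HasFDerivAt f A (B x) := by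
        simpa [B, hgx] using hA
      exact h1.comp x (B.hasFDerivAt)
    have heq : (fun w => f (g w)) = f := funext fun w => hinv g hgG w
    rw [heq] at hB
    have hAB : A.comp B = A := hB.unique hA
    have : A (g v) = A v := by
      calc A (g v) = (A.comp B) v := rfl
        _ = A v := by rw [hAB]
    simp [hu, map_sub, this]
  rintro ⟨α, hα, hle⟩
  -- E1 : eventual upper bound from differentiability
  have hlo := hA.isLittleO.def (half_pos hα)
  have htend : Filter.Tendsto (fun t : ℝ => x + t • u) (nhdsWithin 0 (Set.Ioi 0)) (nhds x) := by
    have : Filter.Tendsto (fun t : ℝ => x + t • u) (nhds 0) (nhds x) := by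
      have hc : Continuous (fun t : ℝ => x + t • u) := by continuity
      simpa using hc.tendsto 0
    exact this.mono_left nhdsWithin_le_nhds
  have E1 : ∀ᶠ t : ℝ in nhdsWithin 0 (Set.Ioi 0),
      ‖f (x + t • u) - f x‖ ≤ α / 2 * (t * ‖u‖) + 0 := by
    filter_upwards [htend.eventually hlo, self_mem_nhdsWithin] with t ht htpos
    have htpos' : (0:ℝ) < t := htpos
    have h1 : A (x + t • u - x) = 0 := by
      simp [map_smul, hAu]
    have h2 : ‖x + t • u - x‖ = t * ‖u‖ := by
      rw [add_sub_cancel_left, norm_smul, Real.norm_eq_abs, abs_of_pos htpos']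
    rw [h1, sub_zero, h2] at ht
    simpa using ht
  -- E2 : eventual lower bound on infDist
  have E2 : ∀ᶠ t : ℝ in nhdsWithin 0 (Set.Ioi 0),
      t * ‖u‖ ≤ Metric.infDist x {w : V | ∃ h ∈ G, h (x + t • u) = w} := by
    have key : ∀ᶠ t : ℝ in nhdsWithin 0 (Set.Ioi 0),
        ∀ h : G, t * ‖u‖ ≤ ‖(h : V ≃ₗᵢ[ℝ] V) (x + t • u) - x‖ := by
      rw [Filter.eventually_all]
      intro h
      by_cases hhx : (h : V ≃ₗᵢ[ℝ] V) x = x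
      · filter_upwards [self_mem_nhdsWithin] with t htpos
        have htpos' : (0:ℝ) < t := htpos
        have : (h : V ≃ₗᵢ[ℝ] V) (x + t • u) - x = t • (h : V ≃ₗᵢ[ℝ] V) u := by
          rw [map_add, map_smul, hhx]; abel
        rw [this, norm_smul, Real.norm_eq_abs, abs_of_pos htpos',
          LinearIsometryEquiv.norm_map]
      · set c : ℝ := ‖(h : V ≃ₗᵢ[ℝ] V) x - x‖ / (2 * ‖u‖) with hc
        have hcpos : 0 < c := by
          apply div_pos (norm_pos_iff.mpr (sub_ne_zero.mpr hhx))
          positivity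
        have hmem : Set.Ioo (0:ℝ) c ∈ nhdsWithin (0:ℝ) (Set.Ioi 0) :=
          Ioo_mem_nhdsGT_of_mem ⟨le_refl 0, hcpos⟩
        filter_upwards [hmem] with t ht
        obtain ⟨htpos, htc⟩ := ht
        have h2 : ‖(h : V ≃ₗᵢ[ℝ] V) x - x‖ = 2 * ‖u‖ * c := by
          rw [hc]; field_simp [hun.ne']
        have h3 : (h : V ≃ₗᵢ[ℝ] V) (x + t • u) - x
            = ((h : V ≃ₗᵢ[ℝ] V) x - x) + t • (h : V ≃ₗᵢ[ℝ] V) u := by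
          rw [map_add, map_smul]; abel
        have h4 : ‖(h : V ≃ₗᵢ[ℝ] V) x - x‖ - ‖t • (h : V ≃ₗᵢ[ℝ] V) u‖
            ≤ ‖(h : V ≃ₗᵢ[ℝ] V) (x + t • u) - x‖ := by
          rw [h3]
          simpa [sub_neg_eq_add] using
            norm_sub_norm_le ((h : V ≃ₗᵢ[ℝ] V) x - x) (-(t • (h : V ≃ₗᵢ[ℝ] V) u))
        have h5 : ‖t • (h : V ≃ₗᵢ[ℝ] V) u‖ = t * ‖u‖ := by
          rw [norm_smul, Real.norm_eq_abs, abs_of_pos htpos, LinearIsometryEquiv.norm_map]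
        nlinarith [h4, h5, htc.le, hun]
    filter_upwards [key] with t ht
    have hne : ({w : V | ∃ h ∈ G, h (x + t • u) = w}).Nonempty :=
      ⟨(1 : V ≃ₗᵢ[ℝ] V) (x + t • u), 1, G.one_mem, rfl⟩
    by_contra hcon
    push_neg at hcon
    obtain ⟨w, hw, hd⟩ := (Metric.infDist_lt_iff hne).mp hcon
    obtain ⟨h, hhG, rfl⟩ := hw
    exact absurd hd (not_lt.mpr (by rw [dist_eq_norm_sub']; exact ht ⟨h, hhG⟩))
  -- combine
  obtain ⟨t, ht1, ht2, htpos⟩ := (E1.and (E2.and self_mem_nhdsWithin)).exists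
  have htpos' : (0:ℝ) < t := htpos
  have := hle (x + t • u) x
  have hchain : α * (t * ‖u‖) ≤ α / 2 * (t * ‖u‖) + 0 := by
    calc α * (t * ‖u‖) ≤ α * Metric.infDist x {w : V | ∃ h ∈ G, h (x + t • u) = w} := by
          exact mul_le_mul_of_nonneg_left ht2 hα.le
      _ ≤ ‖f (x + t • u) - f x‖ := this
      _ ≤ α / 2 * (t * ‖u‖) + 0 := ht1
  nlinarith [hchain, mul_pos htpos' hun, hα]
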